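/- The value function x is convex on (0, ∞): for all s₁, s₂ > 0 and all μ ∈ [0, 1], x(μ·s₁ + (1 − μ)·s₂) ≤ μ·x(s₁) + (1 − μ)·x(s₂). -/

import Mathlib

open BigOperators ENNReal

/-- The per-link cost `f(b) = t / ((1/2)·ln(e^{2t} + b/σ) − t)` for `b > 0`, with the
convention that it is `+∞` when `b ≤ 0` (the denominator vanishes at `b = 0`). -/
noncomputable def fCost (t σ b : ℝ) : ℝ≥0∞ :=
  if 0 < b then
    ENNReal.ofReal (t / ((1 / 2) * Real.log (Real.exp (2 * t) + b / σ) - t))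
  else ⊤

/-- The value function
`x(s) = inf { ∑_{l∈S} f_l(b_l) : b_l ≥ 0 for all l, ∑_{l∈S} b_l ≤ s }`,
with values in `[0, +∞]`. -/
noncomputable def xval (S : Type) [Fintype S] (t σ : S → ℝ) (s : ℝ) : ℝ≥0∞ :=
  sInf { v : ℝ≥0∞ | ∃ b : S → ℝ,
    (∀ l, 0 ≤ b l) ∧ (∑ l, b l) ≤ s ∧ v = ∑ l, fCost (t l) (σ l) (b l) }

/-- The feasible-value set whose infimum is `xval`. -/
def feasSet (S : Type) [Fintype S] (t σ : S → ℝ) (s : ℝ) : Set ℝ≥0∞ :=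
  { v : ℝ≥0∞ | ∃ b : S → ℝ,
    (∀ l, 0 ≤ b l) ∧ (∑ l, b l) ≤ s ∧ v = ∑ l, fCost (t l) (σ l) (b l) }

lemma xval_eq_sInf (S : Type) [Fintype S] (t σ : S → ℝ) (s : ℝ) :
    xval S t σ s = sInf (feasSet S t σ s) := rfl

lemma combo_pos {μ x y : ℝ} (hμ0 : 0 ≤ μ) (hμ1 : μ ≤ 1) (hx : 0 < x) (hy : 0 < y) :
    0 < μ * x + (1 - μ) * y := by
  rcases lt_or_ge μ 1 with h | h
  · nlinarith [mul_nonneg hμ0 hx.le, mul_pos (by linarith : (0:ℝ) < 1 - μ) hy]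
  · have hμ : μ = 1 := le_antisymm hμ1 h
    subst hμ; nlinarith

lemma one_div_combo {μ x y : ℝ} (hμ0 : 0 ≤ μ) (hμ1 : μ ≤ 1) (hx : 0 < x) (hy : 0 < y) :
    1 / (μ * x + (1 - μ) * y) ≤ μ * (1 / x) + (1 - μ) * (1 / y) := by
  have hD := combo_pos hμ0 hμ1 hx hy
  have h : μ * (1 / x) + (1 - μ) * (1 / y) = (μ * y + (1 - μ) * x) / (x * y) := by
    field_simp
    try ring
  rw [h, div_le_div_iff₀ hD (mul_pos hx hy)]
  nlinarith [mul_nonneg (mul_nonneg hμ0 (by linarith : (0:ℝ) ≤ 1 - μ)) (sq_nonneg (x - y))]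

lemma denom_pos {t σ b : ℝ} (ht : 0 < t) (hσ : 0 < σ) (hb : 0 < b) :
    0 < (1 / 2) * Real.log (Real.exp (2 * t) + b / σ) - t := by
  have h1 : Real.exp (2 * t) < Real.exp (2 * t) + b / σ := by
    have := div_pos hb hσ; linarith
  have h2 : Real.log (Real.exp (2 * t)) < Real.log (Real.exp (2 * t) + b / σ) :=
    Real.log_lt_log (Real.exp_pos _) h1
  rw [Real.log_exp] at h2
  linarith

lemma fCost_convex (t σ : ℝ) (ht : 0 < t) (hσ : 0 < σ)
    {μ : ℝ} (hμ0 : 0 ≤ μ) (hμ1 : μ ≤ 1) {a c : ℝ} (ha : 0 ≤ a) (hc : 0 ≤ c) :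
    fCost t σ (μ * a + (1 - μ) * c) ≤
      ENNReal.ofReal μ * fCost t σ a + ENNReal.ofReal (1 - μ) * fCost t σ c := by
  rcases eq_or_lt_of_le ha with ha0 | ha
  · -- a = 0
    rcases eq_or_lt_of_le hμ0 with hμ | hμ
    · rw [← hμ, ← ha0]; norm_num
    · have hA : fCost t σ a = ⊤ := by
        rw [← ha0]; simp [fCost]
      rw [hA, ENNReal.mul_top (ENNReal.ofReal_pos.mpr hμ).ne', top_add]
      exact le_top
  rcases eq_or_lt_of_le hc with hc0 | hc
  · -- c = 0
    rcases eq_or_lt_of_le (by linarith : (0:ℝ) ≤ 1 - μ) with hμ | hμ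
    · have hμ1' : μ = 1 := by linarith
      rw [hμ1', ← hc0]; norm_num
    · have hC : fCost t σ c = ⊤ := by
        rw [← hc0]; simp [fCost]
      rw [hC, ENNReal.mul_top (ENNReal.ofReal_pos.mpr hμ).ne', add_top]
      exact le_top
  -- main case : 0 < a, 0 < c
  have hμ1' : (0:ℝ) ≤ 1 - μ := by linarith
  have hb : 0 < μ * a + (1 - μ) * c := combo_pos hμ0 hμ1 ha hc
  rw [fCost, fCost, fCost, if_pos hb, if_pos ha, if_pos hc]
  set X : ℝ := Real.exp (2 * t) + a / σ with hX
  set Y : ℝ := Real.exp (2 * t) + c / σ with hY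
  have hXpos : 0 < X := by have := Real.exp_pos (2 * t); have := div_pos ha hσ; positivity
  have hYpos : 0 < Y := by have := Real.exp_pos (2 * t); have := div_pos hc hσ; positivity
  have harg : μ * X + (1 - μ) * Y = Real.exp (2 * t) + (μ * a + (1 - μ) * c) / σ := by
    rw [hX, hY]; field_simp; ring
  have hlog := strictConcaveOn_log_Ioi.concaveOn.2 (Set.mem_Ioi.mpr hXpos)
    (Set.mem_Ioi.mpr hYpos) hμ0 hμ1' (by ring)
  simp only [smul_eq_mul] at hlog
  rw [harg] at hlog
  set Da : ℝ := (1 / 2) * Real.log X - t with hDa'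
  set Dc : ℝ := (1 / 2) * Real.log Y - t with hDc'
  set Db : ℝ := (1 / 2) * Real.log (Real.exp (2 * t) + (μ * a + (1 - μ) * c) / σ) - t with hDb'
  have hDa : 0 < Da := denom_pos ht hσ ha
  have hDc : 0 < Dc := denom_pos ht hσ hc
  have hDb : 0 < Db := denom_pos ht hσ hb
  have hge : μ * Da + (1 - μ) * Dc ≤ Db := by
    rw [hDa', hDc', hDb']; nlinarith [hlog]
  have hDcombo : 0 < μ * Da + (1 - μ) * Dc := combo_pos hμ0 hμ1 hDa hDc
  have hmain : t / Db ≤ μ * (t / Da) + (1 - μ) * (t / Dc) := by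
    calc t / Db ≤ t / (μ * Da + (1 - μ) * Dc) := by gcongr
      _ = t * (1 / (μ * Da + (1 - μ) * Dc)) := by rw [mul_one_div]
      _ ≤ t * (μ * (1 / Da) + (1 - μ) * (1 / Dc)) :=
          mul_le_mul_of_nonneg_left (one_div_combo hμ0 hμ1 hDa hDc) ht.le
      _ = μ * (t / Da) + (1 - μ) * (t / Dc) := by ring
  calc ENNReal.ofReal (t / Db)
      ≤ ENNReal.ofReal (μ * (t / Da) + (1 - μ) * (t / Dc)) :=
        ENNReal.ofReal_le_ofReal hmain
    _ = ENNReal.ofReal (μ * (t / Da)) + ENNReal.ofReal ((1 - μ) * (t / Dc)) :=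
        ENNReal.ofReal_add (mul_nonneg hμ0 (div_nonneg ht.le hDa.le))
          (mul_nonneg hμ1' (div_nonneg ht.le hDc.le))
    _ = ENNReal.ofReal μ * ENNReal.ofReal (t / Da)
          + ENNReal.ofReal (1 - μ) * ENNReal.ofReal (t / Dc) := by
        rw [ENNReal.ofReal_mul hμ0, ENNReal.ofReal_mul hμ1']

/-- The value function `x` is convex on `(0, ∞)`: for all `s₁, s₂ > 0`
and `μ ∈ [0, 1]`, `x(μ·s₁ + (1 − μ)·s₂) ≤ μ·x(s₁) + (1 − μ)·x(s₂)`. -/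
theorem xval_convex (S : Type) [Fintype S] [Nonempty S]
    (t σ : S → ℝ) (ht : ∀ l, 0 < t l) (hσ : ∀ l, 0 < σ l) :
    ∀ s₁ s₂ : ℝ, 0 < s₁ → 0 < s₂ → ∀ μ : ℝ, 0 ≤ μ → μ ≤ 1 →
      xval S t σ (μ * s₁ + (1 - μ) * s₂) ≤
        ENNReal.ofReal μ * xval S t σ s₁ + ENNReal.ofReal (1 - μ) * xval S t σ s₂ := by
  intro s₁ s₂ hs₁ hs₂ μ hμ0 hμ1
  rcases eq_or_lt_of_le hμ0 with hμ | hμ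
  · rw [← hμ]; norm_num
  rcases eq_or_lt_of_le hμ1 with hμ1' | hμ1'
  · subst hμ1'; norm_num
  have hμ' : (0:ℝ) < 1 - μ := by linarith
  -- core inequality against arbitrary feasible values
  have core : ∀ v₁ ∈ feasSet S t σ s₁, ∀ v₂ ∈ feasSet S t σ s₂,
      xval S t σ (μ * s₁ + (1 - μ) * s₂) ≤
        ENNReal.ofReal μ * v₁ + ENNReal.ofReal (1 - μ) * v₂ := by
    rintro v₁ ⟨b₁, hb₁0, hb₁s, hv₁⟩ v₂ ⟨b₂, hb₂0, hb₂s, hv₂⟩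
    have hsum : (∑ l, (μ * b₁ l + (1 - μ) * b₂ l)) ≤ μ * s₁ + (1 - μ) * s₂ := by
      rw [Finset.sum_add_distrib, ← Finset.mul_sum, ← Finset.mul_sum]
      exact add_le_add (mul_le_mul_of_nonneg_left hb₁s hμ0)
        (mul_le_mul_of_nonneg_left hb₂s hμ'.le)
    have hmem : (∑ l, fCost (t l) (σ l) (μ * b₁ l + (1 - μ) * b₂ l)) ∈
        feasSet S t σ (μ * s₁ + (1 - μ) * s₂) :=
      ⟨fun l => μ * b₁ l + (1 - μ) * b₂ l,
        fun l => add_nonneg (mul_nonneg hμ0 (hb₁0 l)) (mul_nonneg hμ'.le (hb₂0 l)),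
        hsum, rfl⟩
    calc xval S t σ (μ * s₁ + (1 - μ) * s₂)
        ≤ ∑ l, fCost (t l) (σ l) (μ * b₁ l + (1 - μ) * b₂ l) := sInf_le hmem
      _ ≤ ∑ l, (ENNReal.ofReal μ * fCost (t l) (σ l) (b₁ l)
            + ENNReal.ofReal (1 - μ) * fCost (t l) (σ l) (b₂ l)) :=
          Finset.sum_le_sum fun l _ =>
            fCost_convex (t l) (σ l) (ht l) (hσ l) hμ0 hμ1 (hb₁0 l) (hb₂0 l)
      _ = ENNReal.ofReal μ * v₁ + ENNReal.ofReal (1 - μ) * v₂ := by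
          rw [hv₁, hv₂, Finset.sum_add_distrib, ← Finset.mul_sum, ← Finset.mul_sum]
  -- epsilon argument
  apply ENNReal.le_of_forall_pos_le_add
  intro ε hε hlt
  have hμne : ENNReal.ofReal μ ≠ 0 := (ENNReal.ofReal_pos.mpr hμ).ne'
  have hμ'ne : ENNReal.ofReal (1 - μ) ≠ 0 := (ENNReal.ofReal_pos.mpr hμ').ne'
  have h1top : xval S t σ s₁ ≠ ⊤ := by
    intro h
    rw [h, ENNReal.mul_top hμne, top_add] at hlt
    exact (lt_irrefl _ hlt)
  have h2top : xval S t σ s₂ ≠ ⊤ := by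
    intro h
    rw [h, ENNReal.mul_top hμ'ne, add_top] at hlt
    exact (lt_irrefl _ hlt)
  have hε2 : ((ε : ℝ≥0∞) / 2) ≠ 0 := by
    simp [ENNReal.div_eq_zero_iff, hε.ne']
  obtain ⟨v₁, hv₁mem, hv₁lt⟩ := sInf_lt_iff.mp
    (show sInf (feasSet S t σ s₁) < xval S t σ s₁ + (ε : ℝ≥0∞) / 2 by
      rw [← xval_eq_sInf]; exact ENNReal.lt_add_right h1top hε2)
  obtain ⟨v₂, hv₂mem, hv₂lt⟩ := sInf_lt_iff.mp
    (show sInf (feasSet S t σ s₂) < xval S t σ s₂ + (ε : ℝ≥0∞) / 2 by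
      rw [← xval_eq_sInf]; exact ENNReal.lt_add_right h2top hε2)
  have hofsum : ENNReal.ofReal μ + ENNReal.ofReal (1 - μ) = 1 := by
    rw [← ENNReal.ofReal_add hμ0 hμ'.le]; norm_num
  calc xval S t σ (μ * s₁ + (1 - μ) * s₂)
      ≤ ENNReal.ofReal μ * v₁ + ENNReal.ofReal (1 - μ) * v₂ := core v₁ hv₁mem v₂ hv₂mem
    _ ≤ ENNReal.ofReal μ * (xval S t σ s₁ + (ε : ℝ≥0∞) / 2)
          + ENNReal.ofReal (1 - μ) * (xval S t σ s₂ + (ε : ℝ≥0∞) / 2) :=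
        add_le_add (mul_le_mul_right hv₁lt.le _) (mul_le_mul_right hv₂lt.le _)
    _ = ENNReal.ofReal μ * xval S t σ s₁ + ENNReal.ofReal (1 - μ) * xval S t σ s₂
          + (ENNReal.ofReal μ + ENNReal.ofReal (1 - μ)) * ((ε : ℝ≥0∞) / 2) := by ring
    _ = ENNReal.ofReal μ * xval S t σ s₁ + ENNReal.ofReal (1 - μ) * xval S t σ s₂
          + (ε : ℝ≥0∞) / 2 := by rw [hofsum, one_mul]
    _ ≤ ENNReal.ofReal μ * xval S t σ s₁ + ENNReal.ofReal (1 - μ) * xval S t σ s₂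
          + (ε : ℝ≥0∞) := add_le_add_right ENNReal.half_le_self _
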